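/- Let f: A → B be a linear map of finite-dimensional Q-vector spaces, α: A → U, β: B → U linear with α = β ∘ f. If f is injective and Im(α) = Im(β), then there exists a linear map θ: B → A with θ ∘ f = id_A and α ∘ θ = β. -/

import Mathlib

/-- Converse direction of Remark `natural` / step (i) ⇒ (ii) in Theorem
`main2` of the paper, degreewise: if `f : A → B` is an injective linear map of
finite-dimensional `ℚ`-vector spaces and `α : A → U`, `β : B → U` satisfy
`α = β ∘ f` and `Im(α) = Im(β)`, then there is a retraction `θ : B → A` with
`θ ∘ f = id` and `α ∘ θ = β`. -/
theorem stmt5 {A B U : Type*}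
    [AddCommGroup A] [Module ℚ A] [FiniteDimensional ℚ A]
    [AddCommGroup B] [Module ℚ B] [FiniteDimensional ℚ B]
    [AddCommGroup U] [Module ℚ U]
    (f : A →ₗ[ℚ] B) (α : A →ₗ[ℚ] U) (β : B →ₗ[ℚ] U)
    (hcomm : β ∘ₗ f = α)
    (hf : Function.Injective f)
    (himg : LinearMap.range α = LinearMap.range β) :
    ∃ θ : B →ₗ[ℚ] A, θ ∘ₗ f = LinearMap.id ∧ α ∘ₗ θ = β := by
  classical
  set V : Submodule ℚ B := LinearMap.range f with hV
  set K : Submodule ℚ B := LinearMap.ker β with hK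
  -- V ⊔ K = ⊤
  have hsup : V ⊔ K = ⊤ := by
    rw [eq_top_iff]
    intro b _
    have hb : β b ∈ LinearMap.range α := by rw [himg]; exact ⟨b, rfl⟩
    obtain ⟨a, ha⟩ := hb
    have : b - f a ∈ K := by
      simp only [hK, LinearMap.mem_ker, map_sub]
      have : β (f a) = α a := by
        rw [← hcomm]; rfl
      rw [this, ha, sub_self]
    exact Submodule.mem_sup.2 ⟨f a, ⟨a, rfl⟩, b - f a, this, by abel⟩
  -- complement of (V ⊓ K) inside K
  obtain ⟨Wc, hWc⟩ := Submodule.exists_isCompl ((V ⊓ K).comap K.subtype)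
  set W : Submodule ℚ B := Wc.map K.subtype with hW
  have hWK : W ≤ K := by
    rintro w ⟨⟨w, hwK⟩, _, rfl⟩
    exact hwK
  have hdisj : Disjoint V W := by
    rw [disjoint_iff]
    rw [eq_bot_iff]
    rintro x ⟨hxV, hxW⟩
    obtain ⟨⟨y, hyK⟩, hyWc, rfl⟩ := hxW
    have hyP : (⟨y, hyK⟩ : K) ∈ (V ⊓ K).comap K.subtype := ⟨hxV, hyK⟩
    have := hWc.disjoint.le_bot ⟨hyP, hyWc⟩
    simp only [Submodule.mem_bot] at this
    simp [this]
  have hcod : V ⊔ W = ⊤ := by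
    rw [eq_top_iff, ← hsup, sup_le_iff]
    constructor
    · exact le_sup_left
    · intro k hk
      have : (⟨k, hk⟩ : K) ∈ (V ⊓ K).comap K.subtype ⊔ Wc := by
        rw [hWc.sup_eq_top]; trivial
      obtain ⟨p, hp, w, hw, hpw⟩ := Submodule.mem_sup.1 this
      have : k = (p : B) + (w : B) := by
        have := congrArg (K.subtype) hpw
        simpa using this.symm
      rw [this]
      exact Submodule.add_mem_sup hp.1 ⟨w, hw, rfl⟩
  have hcompl : IsCompl V W := ⟨hdisj, codisjoint_iff.2 hcod⟩
  set e : A ≃ₗ[ℚ] V := LinearEquiv.ofInjective f hf with he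
  set θ : B →ₗ[ℚ] A := e.symm.toLinearMap ∘ₗ V.linearProjOfIsCompl W hcompl with hθ
  have hβf : ∀ a, β (f a) = α a := fun a => by rw [← hcomm]; rfl
  have hθf : ∀ a, θ (f a) = a := by
    intro a
    have h1 : V.linearProjOfIsCompl W hcompl (f a) = ⟨f a, ⟨a, rfl⟩⟩ :=
      Submodule.linearProjOfIsCompl_apply_left hcompl ⟨f a, ⟨a, rfl⟩⟩
    have h2 : e a = ⟨f a, ⟨a, rfl⟩⟩ := by
      apply Subtype.ext
      exact LinearEquiv.ofInjective_apply f a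
    simp only [hθ, LinearMap.comp_apply, LinearEquiv.coe_coe, h1, ← h2,
      LinearEquiv.symm_apply_apply]
  refine ⟨θ, ?_, ?_⟩
  · ext a; simpa using hθf a
  · ext b
    obtain ⟨v, w, hv, hw, rfl⟩ := Submodule.codisjoint_iff_exists_add_eq.mp hcompl.codisjoint b
    obtain ⟨a, ha⟩ := hv
    have hθw : θ w = 0 := by
      simp [hθ, Submodule.linearProjOfIsCompl, Submodule.projectionOnto_apply_of_mem_right hcompl hw]
    have hβw : β w = 0 := hWK hw
    simp only [LinearMap.comp_apply, map_add, hθw, ← ha, hθf a, map_zero, add_zero, hβf a, hβw]
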